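/- For all integers n and j with 0 < j < n/2, and every integer l ≥ 1, the rational number 2^{⌊n/2⌋} · C(n+1, j+1) · C(l+n, l−1) · (n−2j)(j+1) / ((l+j)(l+n−j)) is a positive integer. -/
import Mathlib
set_option maxHeartbeats 1000000

lemma aux_hsm (x y z P A G H J D K c : ℚ) (hJ : J ≠ 0) (hD : D ≠ 0) (hK : K ≠ 0)
    (hG : G ≠ 0) (hH : H ≠ 0) (hP : P ≠ 0) (h1 : x + 1 ≠ 0) (h2 : z + 1 + x ≠ 0)
    (h3 : z + 1 + y ≠ 0) :
    c * (P / ((x + 1) * J * D)) * (A / (K * P)) * ((x + y - 2 * x) * (x + 1)) /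
        ((z + 1 + x) * (z + 1 + (x + y) - x))
      = c * (G / (J * K) * (A / (D * ((z + 1 + x) * G))) -
          H / (D * K) * (A / (J * ((z + 1 + y) * H)))) := by
  have h4 : z + 1 + (x + y) - x = z + 1 + y := by ring
  rw [h4]
  field_simp
  ring

/-- For integers `0 < j < n/2` and `l ≥ 1`, the multiplicity
`2^⌊n/2⌋ · C(n+1, j+1) · C(l+n, l-1) · (n-2j)(j+1) / ((l+j)(l+n-j))` of the
first eigenvalue series of the higher spin Dirac operator `D_{λⱼ}` on `Sⁿ`
is a positive integer. -/
theorem higher_spin_multiplicity_is_posint (n j l : ℕ)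
    (hj : 0 < j) (hn : 2 * j < n) (hl : 1 ≤ l) :
    ∃ m : ℤ, 0 < m ∧
      (2 : ℚ) ^ (n / 2) * ((n + 1).choose (j + 1)) * ((l + n).choose (l - 1)) *
          (((n : ℚ) - 2 * j) * ((j : ℚ) + 1)) /
          (((l : ℚ) + j) * ((l : ℚ) + (n : ℚ) - j)) = m := by
  obtain ⟨k, rfl⟩ : ∃ k, l = k + 1 := ⟨l - 1, by omega⟩
  obtain ⟨d, rfl⟩ : ∃ d, n = j + d := ⟨n - j, by omega⟩
  have hd : j < d := by omega
  set M : ℤ := 2 ^ ((j + d) / 2) *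
      (((k + j).choose j : ℤ) * ((k + 1 + j + d).choose d : ℤ) -
        ((k + d).choose d : ℤ) * ((k + 1 + j + d).choose j : ℤ)) with hM
  have hkk : k + 1 - 1 = k := by omega
  have nz : ∀ a : ℕ, (Nat.factorial a : ℚ) ≠ 0 := fun a =>
    Nat.cast_ne_zero.mpr (Nat.factorial_ne_zero a)
  have hA : ((k : ℚ) + 1 + j) ≠ 0 := by positivity
  have hB : ((k : ℚ) + 1 + d) ≠ 0 := by positivity
  have hjq : ((j : ℚ) + 1) ≠ 0 := by positivity
  have f3 : ((Nat.factorial (j + 1)) : ℚ) = ((j : ℚ) + 1) * Nat.factorial j := by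
    rw [Nat.factorial_succ, Nat.cast_mul, Nat.cast_add_one]
  have f1 : ((Nat.factorial (k + j + 1)) : ℚ) = ((k : ℚ) + 1 + j) * Nat.factorial (k + j) := by
    rw [Nat.factorial_succ, Nat.cast_mul]; push_cast; ring
  have f2 : ((Nat.factorial (k + d + 1)) : ℚ) = ((k : ℚ) + 1 + d) * Nat.factorial (k + d) := by
    rw [Nat.factorial_succ, Nat.cast_mul]; push_cast; ring
  have e1 : (((j + d + 1).choose (j + 1)) : ℚ)
      = (Nat.factorial (j + d + 1) : ℚ) / (((j:ℚ) + 1) * Nat.factorial j * Nat.factorial d) := by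
    rw [Nat.cast_choose ℚ (by omega), show j + d + 1 - (j + 1) = d from by omega, f3]
  have e2 : (((k + 1 + (j + d)).choose k) : ℚ)
      = (Nat.factorial (k + 1 + j + d) : ℚ) / (Nat.factorial k * Nat.factorial (j + d + 1)) := by
    rw [Nat.cast_choose ℚ (by omega), show k + 1 + (j + d) - k = j + d + 1 from by omega,
      show k + 1 + (j + d) = k + 1 + j + d from by omega]
  have e3 : (((k + j).choose j) : ℚ)
      = (Nat.factorial (k + j) : ℚ) / (Nat.factorial j * Nat.factorial k) := by
    rw [Nat.cast_choose ℚ (by omega), show k + j - j = k from by omega]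
  have e4 : (((k + 1 + j + d).choose d) : ℚ)
      = (Nat.factorial (k + 1 + j + d) : ℚ) /
        (Nat.factorial d * (((k:ℚ) + 1 + j) * Nat.factorial (k + j))) := by
    rw [Nat.cast_choose ℚ (by omega), show k + 1 + j + d - d = k + j + 1 from by omega, f1]
  have e5 : (((k + d).choose d) : ℚ)
      = (Nat.factorial (k + d) : ℚ) / (Nat.factorial d * Nat.factorial k) := by
    rw [Nat.cast_choose ℚ (by omega), show k + d - d = k from by omega]
  have e6 : (((k + 1 + j + d).choose j) : ℚ)
      = (Nat.factorial (k + 1 + j + d) : ℚ) /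
        (Nat.factorial j * (((k:ℚ) + 1 + d) * Nat.factorial (k + d))) := by
    rw [Nat.cast_choose ℚ (by omega), show k + 1 + j + d - j = k + d + 1 from by omega, f2]
  have hEq : (2 : ℚ) ^ ((j + d) / 2) * (((j + d + 1).choose (j + 1) : ℕ) : ℚ) *
      ((((k + 1) + (j + d)).choose ((k + 1) - 1) : ℕ) : ℚ) *
      (((((j + d : ℕ)) : ℚ) - 2 * (j : ℚ)) * ((j : ℚ) + 1)) /
      (((((k + 1 : ℕ)) : ℚ) + (j : ℚ)) *
        ((((k + 1 : ℕ)) : ℚ) + (((j + d : ℕ)) : ℚ) - (j : ℚ))) = (M : ℚ) := by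
    rw [hkk, hM]
    push_cast [e1, e2, e3, e4, e5, e6]
    exact aux_hsm (j:ℚ) (d:ℚ) (k:ℚ) _ _ _ _ _ _ _ _ (nz j) (nz d) (nz k)
      (nz _) (nz _) (nz _) hjq hA hB
  refine ⟨M, ?_, hEq⟩
  have hpos : (0 : ℚ) < (2 : ℚ) ^ ((j + d) / 2) * (((j + d + 1).choose (j + 1) : ℕ) : ℚ) *
      ((((k + 1) + (j + d)).choose ((k + 1) - 1) : ℕ) : ℚ) *
      (((((j + d : ℕ)) : ℚ) - 2 * (j : ℚ)) * ((j : ℚ) + 1)) /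
      (((((k + 1 : ℕ)) : ℚ) + (j : ℚ)) *
        ((((k + 1 : ℕ)) : ℚ) + (((j + d : ℕ)) : ℚ) - (j : ℚ))) := by
    apply div_pos
    · have c1 : (0:ℚ) < (((j + d + 1).choose (j + 1) : ℕ) : ℚ) :=
        Nat.cast_pos.mpr (Nat.choose_pos (by omega))
      have c2 : (0:ℚ) < ((((k + 1) + (j + d)).choose ((k + 1) - 1) : ℕ) : ℚ) :=
        Nat.cast_pos.mpr (Nat.choose_pos (by omega))
      have c3 : (0:ℚ) < (((j + d : ℕ)) : ℚ) - 2 * (j : ℚ) := by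
        have : (j : ℚ) < d := by exact_mod_cast hd
        push_cast; linarith
      have c4 : (0:ℚ) < (2 : ℚ) ^ ((j + d) / 2) := by positivity
      have c5 : (0:ℚ) < (j : ℚ) + 1 := by positivity
      exact mul_pos (mul_pos (mul_pos c4 c1) c2) (mul_pos c3 c5)
    · have c6 : (0:ℚ) < (((k + 1 : ℕ)) : ℚ) + (j : ℚ) := by push_cast; positivity
      have c7 : (0:ℚ) < (((k + 1 : ℕ)) : ℚ) + (((j + d : ℕ)) : ℚ) - (j : ℚ) := by
        push_cast
        have h0 : (0:ℚ) ≤ (k : ℚ) := by positivity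
        have h1 : (0:ℚ) ≤ (d : ℚ) := by positivity
        linarith
      exact mul_pos c6 c7
  rw [hEq] at hpos
  exact_mod_cast hpos
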